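/- Suppose 𝒢 is connected, has at least one zealot, and its node set 𝒩 is partitioned into sets I and J such that J contains no zealots and there is a node i ∈ I with the property that every path in 𝒢 from a node of J to a zealot passes through i. Then at every steady state x of the SBCM, x_j = x_i for all j ∈ J. -/
import Mathlib


open Finset Filter

namespace SBCM

variable {V : Type*} [Fintype V] [DecidableEq V]

/-- Sigmoidal influence weight. -/
noncomputable def wt (G : SimpleGraph V) [DecidableRel G.Adj] (γ δ : ℝ) (x : V → ℝ)
    (i j : V) : ℝ :=
  if G.Adj i j then 1 / (1 + Real.exp (γ * (x i - x j) ^ 2 - γ * δ)) else 0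

/-- SBCM update operator. -/
noncomputable def F (G : SimpleGraph V) [DecidableRel G.Adj] (Z : Finset V) (γ δ : ℝ)
    (x : V → ℝ) (i : V) : ℝ :=
  if i ∈ Z then 0
  else (∑ j, wt G γ δ x i j * (x j - x i)) / (∑ j, wt G γ δ x i j)

/-- Jacobian block over the persuadable nodes. -/
noncomputable def Jp (G : SimpleGraph V) [DecidableRel G.Adj] (Z : Finset V) (γ δ : ℝ)
    (x : V → ℝ) : Matrix {v : V // v ∉ Z} {v : V // v ∉ Z} ℝ :=
  fun i j => fderiv ℝ (fun y : V → ℝ => F G Z γ δ y i.val) x (Pi.single (j : V) (1 : ℝ))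

/-- `μ` is a (real) eigenvalue of the matrix `M`. -/
def HasEig {n : Type*} [Fintype n] (M : Matrix n n ℝ) (μ : ℝ) : Prop :=
  ∃ φ : n → ℝ, φ ≠ 0 ∧ M.mulVec φ = μ • φ

/-- All eigenvalues of `M` are strictly negative. -/
def LinStable {n : Type*} [Fintype n] (M : Matrix n n ℝ) : Prop :=
  ∀ μ : ℝ, HasEig M μ → μ < 0

/-- `M` has a strictly positive eigenvalue. -/
def LinUnstable {n : Type*} [Fintype n] (M : Matrix n n ℝ) : Prop :=
  ∃ μ : ℝ, 0 < μ ∧ HasEig M μ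

end SBCM

lemma sbcm_wt_nonneg {V : Type*} [Fintype V] [DecidableEq V]
    (G : SimpleGraph V) [DecidableRel G.Adj] (γ δ : ℝ) (x : V → ℝ) (a b : V) :
    0 ≤ SBCM.wt G γ δ x a b := by
  unfold SBCM.wt
  split
  · positivity
  · exact le_refl 0

lemma sbcm_wt_pos {V : Type*} [Fintype V] [DecidableEq V]
    (G : SimpleGraph V) [DecidableRel G.Adj] (γ δ : ℝ) (x : V → ℝ) {a b : V}
    (h : G.Adj a b) : 0 < SBCM.wt G γ δ x a b := by
  unfold SBCM.wt
  rw [if_pos h]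
  positivity

/-- Maximum-principle half of statement 10. -/
lemma sbcm_aux {V : Type*} [Fintype V] [DecidableEq V]
    (G : SimpleGraph V) [DecidableRel G.Adj] (Z : Finset V)
    (hconn : G.Connected) (hZ : Z.Nonempty)
    (J : Set V) (i : V) (hiJ : i ∉ J)
    (hcut : ∀ j ∈ J, ∀ z ∈ Z, ∀ p : G.Walk j z, i ∈ p.support)
    (γ δ : ℝ) (x : V → ℝ)
    (hnum : ∀ k, k ∉ Z → ∑ j, SBCM.wt G γ δ x k j * (x j - x k) = 0) :
    ∀ j ∈ J, x j ≤ x i := by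
  classical
  -- the set of vertices reachable from J without passing through i
  set S : Set V := {v | ∃ j ∈ J, ∃ p : G.Walk j v, i ∉ p.support} with hS
  have hiS : i ∉ S := by
    rintro ⟨j, hj, p, hp⟩
    exact hp p.end_mem_support
  have hJS : ∀ j ∈ J, j ∈ S := by
    intro j hj
    refine ⟨j, hj, SimpleGraph.Walk.nil, ?_⟩
    rw [SimpleGraph.Walk.support_nil]
    simp only [List.mem_singleton]
    rintro rfl
    exact hiJ hj
  have hSZ : ∀ v ∈ S, v ∉ Z := by
    rintro v ⟨j, hj, p, hp⟩ hvZ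
    exact hp (hcut j hj v hvZ p)
  have hnbrS : ∀ v ∈ S, ∀ u, G.Adj v u → u ∈ S ∨ u = i := by
    rintro v ⟨j, hj, p, hp⟩ u hadj
    by_cases hu : u = i
    · exact Or.inr hu
    · refine Or.inl ⟨j, hj, p.concat hadj, ?_⟩
      rw [SimpleGraph.Walk.support_concat]
      simp only [List.concat_eq_append, List.mem_append, List.mem_singleton]
      rintro (h | h)
      · exact hp h
      · exact hu h.symm
  -- the local maximum principle at a steady-state non-zealot
  have key : ∀ k, k ∉ Z → (∀ u, G.Adj k u → x u ≤ x k) →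
      ∀ u, G.Adj k u → x u = x k := by
    intro k hk hle u hadj
    have h0 := hnum k hk
    have hterm : ∀ j ∈ Finset.univ, SBCM.wt G γ δ x k j * (x j - x k) ≤ 0 := by
      intro j _
      by_cases hadj2 : G.Adj k j
      · exact mul_nonpos_of_nonneg_of_nonpos (sbcm_wt_nonneg G γ δ x k j)
          (sub_nonpos.mpr (hle j hadj2))
      · simp [SBCM.wt, hadj2]
    have hzero := (Finset.sum_eq_zero_iff_of_nonpos hterm).mp h0 u (Finset.mem_univ u)
    have hw := sbcm_wt_pos G γ δ x hadj
    have hd : x u - x k = 0 := by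
      rcases mul_eq_zero.mp hzero with h | h
      · exact absurd h (ne_of_gt hw)
      · exact h
    linarith
  -- the finite set S ∪ {i} and its maximizer
  set T : Finset V := Finset.univ.filter (fun v => v ∈ S ∨ v = i) with hT
  have hiT : i ∈ T := by simp [hT]
  have hST : ∀ v ∈ S, v ∈ T := by intro v hv; simp [hT, hv]
  obtain ⟨v, hvT, hvmax⟩ := Finset.exists_max_image T x ⟨i, hiT⟩
  -- propagation of the maximum along a walk reaching i
  have prop : ∀ (a b : V) (q : G.Walk a b), a ∈ S → x a = x v →
      i ∈ q.support → x i = x v := by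
    intro a b q
    induction q with
    | nil =>
      intro ha hxa hi
      rw [SimpleGraph.Walk.support_nil, List.mem_singleton] at hi
      rw [hi]; exact hxa
    | @cons a c b hadj q ih =>
      intro ha hxa hi
      have hle : ∀ u, G.Adj a u → x u ≤ x a := by
        intro u hu
        rcases hnbrS a ha u hu with h | h
        · rw [hxa]; exact hvmax u (hST u h)
        · rw [hxa, h]; exact hvmax i hiT
      have heq := key a (hSZ a ha) hle c hadj
      have hxc : x c = x v := heq.trans hxa
      rcases hnbrS a ha c hadj with hcS | hci
      · apply ih hcS hxc
        rw [SimpleGraph.Walk.support_cons, List.mem_cons] at hi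
        rcases hi with h | h
        · exact absurd (h ▸ ha) hiS
        · exact h
      · rw [← hci]; exact hxc
  -- the maximum is attained at i
  have hxi : x i = x v := by
    rcases (Finset.mem_filter.mp hvT).2 with hvS | rfl
    · obtain ⟨j, hj, p, hp⟩ := hvS
      obtain ⟨z, hz⟩ := hZ
      obtain ⟨q⟩ := hconn.preconnected v z
      have hsup := hcut j hj z hz (p.append q)
      rw [SimpleGraph.Walk.support_append, List.mem_append] at hsup
      rcases hsup with h | h
      · exact absurd h hp
      · exact prop v z q ⟨j, hj, p, hp⟩ rfl (List.mem_of_mem_tail h)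
    · rfl
  intro j hj
  rw [hxi]
  exact hvmax j (hST j (hJS j hj))

/-- If `𝒢` is connected, `J` contains no zealots, and every path from a
node of `J` to a zealot passes through the node `i ∈ I`, then at every steady state
`x` of the SBCM one has `x_j = x_i` for all `j ∈ J`. -/
theorem stmt_10 {V : Type*} [Fintype V] [DecidableEq V]
    (G : SimpleGraph V) [DecidableRel G.Adj] (Z : Finset V)
    (hnbr : ∀ i : V, i ∉ Z → ∃ j, G.Adj i j)
    (hconn : G.Connected) (hZ : Z.Nonempty)
    (I J : Set V)
    (hcover : ∀ v : V, v ∈ I ∨ v ∈ J)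
    (hdisj : ∀ v : V, ¬(v ∈ I ∧ v ∈ J))
    (hJZ : ∀ v ∈ J, v ∉ Z)
    (i : V) (hiI : i ∈ I)
    (hcut : ∀ j ∈ J, ∀ z ∈ Z, ∀ p : G.Walk j z, i ∈ p.support)
    (γ δ : ℝ) (hγ : 0 ≤ γ) (hδ : 0 ≤ δ)
    (x : V → ℝ) (hss : ∀ k, SBCM.F G Z γ δ x k = 0) :
    ∀ j ∈ J, x j = x i := by
  classical
  have hiJ : i ∉ J := fun h => hdisj i ⟨hiI, h⟩
  -- numerator vanishes at every non-zealot
  have hnum : ∀ k, k ∉ Z → ∑ j, SBCM.wt G γ δ x k j * (x j - x k) = 0 := by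
    intro k hk
    have h := hss k
    unfold SBCM.F at h
    rw [if_neg hk] at h
    obtain ⟨n, hn⟩ := hnbr k hk
    have hden : 0 < ∑ j, SBCM.wt G γ δ x k j :=
      Finset.sum_pos' (fun j _ => sbcm_wt_nonneg G γ δ x k j)
        ⟨n, Finset.mem_univ n, sbcm_wt_pos G γ δ x hn⟩
    rcases div_eq_zero_iff.mp h with h' | h'
    · exact h'
    · exact absurd h' (ne_of_gt hden)
  -- weights are invariant under negating all opinions
  have hwt : ∀ a b, SBCM.wt G γ δ (fun v => -x v) a b = SBCM.wt G γ δ x a b := by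
    intro a b
    unfold SBCM.wt
    have : (-x a - -x b) ^ 2 = (x a - x b) ^ 2 := by ring
    rw [this]
  have hnum' : ∀ k, k ∉ Z →
      ∑ j, SBCM.wt G γ δ (fun v => -x v) k j * ((fun v => -x v) j - (fun v => -x v) k)
        = 0 := by
    intro k hk
    have : ∀ j, SBCM.wt G γ δ (fun v => -x v) k j *
        ((fun v => -x v) j - (fun v => -x v) k)
        = -(SBCM.wt G γ δ x k j * (x j - x k)) := by
      intro j; rw [hwt]; ring
    simp only [this, Finset.sum_neg_distrib]
    rw [hnum k hk, neg_zero]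
  have h1 := sbcm_aux G Z hconn hZ J i hiJ hcut γ δ x hnum
  have h2 := sbcm_aux G Z hconn hZ J i hiJ hcut γ δ (fun v => -x v) hnum'
  intro j hj
  have := h1 j hj
  have := h2 j hj
  simp only [neg_le_neg_iff] at this
  linarith [h1 j hj, h2 j hj]
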